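/- arXiv:2105.13748 — 3 statements merged into one kernel-verified Lean document; each statement's English description precedes it below -/
import Mathlib

section
/- For each integer k ≥ 2, the unique positive root s_k of s^{k+1} = ∑_{i=0}^{k} s^i satisfies 2 - 2^{-k-1}·e < s_k < 2 - 2^{-k-1}, where e is the base of natural logarithms. -/
lemma aux_num : ∀ k : ℕ, 2 ≤ k → ((k:ℝ)+1) * 7.39 < 1.71 * 2^(k+2) := by
  intro k hk
  induction k with
  | zero => omega
  | succ n ih =>
    rcases Nat.lt_or_ge n 2 with h | h
    · interval_cases n
      · omega
      · norm_num
    · have h1 := ih h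
      have h2 : (7.39:ℝ) ≤ 1.71 * 2^(n+2) := by
        have h3 : (16:ℝ) ≤ 2^(n+2) := by
          calc (16:ℝ) = 2^4 := by norm_num
          _ ≤ 2^(n+2) := by
            apply pow_le_pow_right₀ (by norm_num)
            omega
        nlinarith
      have h4 : (2:ℝ)^(n+1+2) = 2 * 2^(n+2) := by ring
      push_cast
      push_cast at h1
      nlinarith [h1, h2]

set_option maxHeartbeats 1000000 in
theorem positive_root_bounds (k : ℕ) (hk : 2 ≤ k) (s : ℝ)
    (hs : 0 < s) (hroot : s ^ (k + 1) = ∑ i ∈ Finset.range (k + 1), s ^ i) :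
    2 - Real.exp 1 / 2 ^ (k + 1) < s ∧ s < 2 - 1 / 2 ^ (k + 1) := by
  have hkr : (2:ℝ) ≤ (k:ℝ) := by exact_mod_cast hk
  have hgeom := geom_sum_mul s (k+1)
  rw [← hroot] at hgeom
  -- hgeom : s^(k+1) * (s - 1) = s^(k+1) - 1
  have heq : s^(k+1) * (2 - s) = 1 := by linear_combination (-1:ℝ) * hgeom
  have hpow : 0 < s^(k+1) := pow_pos hs _
  have ht : 0 < 2 - s := by nlinarith [heq, hpow]
  -- s ≥ 1
  have hs1 : 1 ≤ s := by
    by_contra h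
    push_neg at h
    have hbound : ∀ i ∈ Finset.range (k+1), s^(k+1) ≤ s^i := by
      intro i hi
      exact pow_le_pow_of_le_one hs.le h.le (Nat.le_of_lt_succ (Nat.lt_succ_of_lt (Finset.mem_range.mp hi)))
    have hsum := Finset.card_nsmul_le_sum (Finset.range (k+1)) _ _ hbound
    rw [Finset.card_range, nsmul_eq_mul] at hsum
    rw [← hroot] at hsum
    push_cast at hsum
    nlinarith [hpow, hsum]
  -- s^(k+1) ≥ k+1
  have hk1 : (k:ℝ) + 1 ≤ s^(k+1) := by
    have hbound : ∀ i ∈ Finset.range (k+1), (1:ℝ) ≤ s^i := by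
      intro i hi
      exact one_le_pow₀ hs1
    have hsum := Finset.card_nsmul_le_sum (Finset.range (k+1)) _ _ hbound
    rw [Finset.card_range, nsmul_eq_mul] at hsum
    rw [← hroot] at hsum
    push_cast at hsum
    linarith [hsum]
  have hP : (0:ℝ) < 2^(k+1) := by positivity
  -- upper bound
  have h2s : s < 2 := by linarith
  have hp2 : s^(k+1) < 2^(k+1) := pow_lt_pow_left₀ h2s hs.le (by omega)
  have hub : s < 2 - 1 / 2^(k+1) := by
    have h5 : 1 / (2:ℝ)^(k+1) < 2 - s := by
      rw [div_lt_iff₀ hP]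
      nlinarith [heq, hp2, ht]
    linarith
  refine ⟨?_, hub⟩
  -- lower bound
  by_contra hcon
  push_neg at hcon
  set t : ℝ := 2 - s with htdef
  set t0 : ℝ := Real.exp 1 / 2^(k+1) with ht0def
  have he1 : (2.7182818283:ℝ) < Real.exp 1 := Real.exp_one_gt_d9
  have he2 : Real.exp 1 < 2.7182818286 := Real.exp_one_lt_d9
  have ht0pos : 0 < t0 := by
    apply div_pos (by positivity) hP
  have hcon' : t0 ≤ t := by
    simp only [htdef, ht0def]
    linarith [hcon]
  -- t ≤ 1/(k+1), i.e. t*(k+1) ≤ 1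
  have htk : t * ((k:ℝ)+1) ≤ 1 := by
    have : t * ((k:ℝ)+1) ≤ t * s^(k+1) := by
      apply mul_le_mul_of_nonneg_left hk1 ht.le
    nlinarith [heq]
  -- Bernoulli
  have hb : 1 - ((k:ℝ)+1)*(t/2) ≤ (1 - t/2)^(k+1) := by
    have hber := one_add_mul_le_pow (a := -(t/2)) (by nlinarith : (-2:ℝ) ≤ -(t/2)) (k+1)
    push_cast at hber
    calc 1 - ((k:ℝ)+1)*(t/2) = 1 + ((k:ℝ)+1) * (-(t/2)) := by ring
    _ ≤ (1 + -(t/2))^(k+1) := hber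
    _ = (1 - t/2)^(k+1) := by ring_nf
  -- rewrite heq in terms of t
  have heqt : 2^(k+1) * (1 - t/2)^(k+1) * t = 1 := by
    have hst : s = 2 * (1 - t/2) := by simp [htdef]; ring
    calc 2^(k+1) * (1 - t/2)^(k+1) * t = (2*(1 - t/2))^(k+1) * t := by rw [mul_pow]
    _ = s^(k+1) * (2 - s) := by rw [← hst]
    _ = 1 := heq
  -- chain
  have hstep1 : 2^(k+1) * ((1 - ((k:ℝ)+1)*(t/2)) * t) ≤ 1 := by
    have h6 := mul_le_mul_of_nonneg_right hb ht.le
    calc 2^(k+1) * ((1 - ((k:ℝ)+1)*(t/2)) * t) ≤ 2^(k+1) * ((1 - t/2)^(k+1) * t) :=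
          mul_le_mul_of_nonneg_left h6 hP.le
    _ = 2^(k+1) * (1 - t/2)^(k+1) * t := by rw [mul_assoc]
    _ = 1 := heqt
  -- quadratic monotonicity
  have hfac : 0 ≤ 1 - ((k:ℝ)+1)*(t+t0)/2 := by nlinarith [htk, hcon', ht0pos]
  have hstep2 : (1 - ((k:ℝ)+1)*(t0/2)) * t0 ≤ (1 - ((k:ℝ)+1)*(t/2)) * t := by
    nlinarith [mul_nonneg (sub_nonneg.2 hcon') hfac]
  -- numeric bound
  have hnum : ((k:ℝ)+1) * (Real.exp 1 * Real.exp 1) < (Real.exp 1 - 1) * 2^(k+2) := by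
    have h1 := aux_num k hk
    have he5 : Real.exp 1 < 2.7183 := by linarith
    have he3 : (Real.exp 1 * Real.exp 1) < 7.39 := by
      have := mul_lt_mul'' he5 he5 (Real.exp_pos 1).le (Real.exp_pos 1).le
      nlinarith [this]
    have he4 : (1.71:ℝ) < Real.exp 1 - 1 := by linarith
    have hP2 : (0:ℝ) < 2^(k+2) := by positivity
    calc ((k:ℝ)+1) * (Real.exp 1 * Real.exp 1) ≤ ((k:ℝ)+1) * 7.39 := by nlinarith
    _ < 1.71 * 2^(k+2) := h1
    _ ≤ (Real.exp 1 - 1) * 2^(k+2) := by nlinarith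
  have hPt0 : 2^(k+1) * t0 = Real.exp 1 := by
    rw [ht0def]; field_simp
  have h22 : (2:ℝ)^(k+2) = 2 * 2^(k+1) := by ring
  rw [h22] at hnum
  have hstep3 : 1 < 2^(k+1) * ((1 - ((k:ℝ)+1)*(t0/2)) * t0) := by
    have hexpand : 2^(k+1) * ((1 - ((k:ℝ)+1)*(t0/2)) * t0)
        = Real.exp 1 - ((k:ℝ)+1) * (Real.exp 1 * Real.exp 1) / (2 * 2^(k+1)) := by
      rw [ht0def]
      field_simp
    rw [hexpand]
    have hd : ((k:ℝ)+1) * (Real.exp 1 * Real.exp 1) / (2 * 2^(k+1)) < Real.exp 1 - 1 := by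
      rw [div_lt_iff₀ (by positivity : (0:ℝ) < 2 * 2^(k+1))]
      linarith [hnum]
    linarith [hd]
  have hfinal : 2^(k+1) * ((1 - ((k:ℝ)+1)*(t0/2)) * t0) ≤ 2^(k+1) * ((1 - ((k:ℝ)+1)*(t/2)) * t) :=
    mul_le_mul_of_nonneg_left hstep2 hP.le
  linarith [hstep1, hstep3, hfinal]
end

section
/- The sequence (s_k)_{k≥1}, where s_k is the unique positive root of s^{k+1} = ∑_{i=0}^{k} s^i, is strictly increasing: s_k < s_{k+1} for all k ≥ 1. -/
theorem positive_roots_strictly_increasing (k : ℕ) (hk : 1 ≤ k) (s t : ℝ)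
    (hs : 0 < s) (hroots : s ^ (k + 1) = ∑ i ∈ Finset.range (k + 1), s ^ i)
    (ht : 0 < t) (hroott : t ^ (k + 2) = ∑ i ∈ Finset.range (k + 2), t ^ i) :
    s < t := by
  -- s > 1
  have hs1 : 1 < s := by
    have h1 : s ^ k < s ^ (k + 1) := by
      rw [hroots, Finset.sum_range_succ]
      have : 0 < ∑ i ∈ Finset.range k, s ^ i := by
        apply Finset.sum_pos
        · intro i _; positivity
        · exact Finset.nonempty_range_iff.mpr (by omega)
      linarith
    nlinarith [pow_pos hs k, pow_succ s k]
  -- s < 2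
  have hs2 : s < 2 := by
    have hgm : (∑ i ∈ Finset.range (k+1), s ^ i) * (s - 1) = s ^ (k+1) - 1 :=
      geom_sum_mul s (k+1)
    rw [← hroots] at hgm
    nlinarith [pow_pos hs (k+1)]
  -- key: s^{k+2} < ∑_{i<k+2} s^i
  have hkey : s ^ (k + 2) < ∑ i ∈ Finset.range (k + 2), s ^ i := by
    rw [Finset.sum_range_succ, ← hroots]
    nlinarith [pow_pos hs (k+1), pow_succ s (k+1)]
  by_contra hle
  push_neg at hle  -- t ≤ s
  have hterm : ∀ i ∈ Finset.range (k + 2), t ^ (k + 2) * s ^ i ≤ s ^ (k + 2) * t ^ i := by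
    intro i hi
    rw [Finset.mem_range] at hi
    have hts : t ^ (k + 2 - i) ≤ s ^ (k + 2 - i) := pow_le_pow_left₀ ht.le hle _
    calc t ^ (k + 2) * s ^ i = t ^ i * t ^ (k + 2 - i) * s ^ i := by
          rw [← pow_add]; congr 2; omega
      _ ≤ t ^ i * s ^ (k + 2 - i) * s ^ i :=
          mul_le_mul_of_nonneg_right
            (mul_le_mul_of_nonneg_left hts (pow_nonneg ht.le i)) (pow_nonneg hs.le i)
      _ = (s ^ (k + 2 - i) * s ^ i) * t ^ i := by ring
      _ = s ^ (k + 2) * t ^ i := by rw [← pow_add]; congr 2; omega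
  have hsum : t ^ (k + 2) * ∑ i ∈ Finset.range (k + 2), s ^ i ≤
      s ^ (k + 2) * ∑ i ∈ Finset.range (k + 2), t ^ i := by
    rw [Finset.mul_sum, Finset.mul_sum]
    exact Finset.sum_le_sum hterm
  rw [← hroott] at hsum
  have h1 : t ^ (k + 2) * s ^ (k + 2) < t ^ (k + 2) * ∑ i ∈ Finset.range (k + 2), s ^ i :=
    (mul_lt_mul_iff_right₀ (pow_pos ht _)).mpr hkey
  nlinarith
end

section
/- The sequence (s_k)_{k≥1}, where s_k is the unique positive root of s^{k+1} = ∑_{i=0}^{k} s^i, converges to 2 as k → ∞. -/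
theorem positive_roots_tendsto_two (s : ℕ → ℝ)
    (h : ∀ k, 1 ≤ k → 0 < s k ∧ s k ^ (k + 1) = ∑ i ∈ Finset.range (k + 1), s k ^ i) :
    Filter.Tendsto s Filter.atTop (nhds 2) := by
  have key : ∀ k : ℕ, 1 ≤ k → 2 - 1 / ((k : ℝ) + 1) ≤ s k ∧ s k ≤ 2 := by
    intro k hk
    obtain ⟨hpos, heq⟩ := h k hk
    -- s k > 1
    have h1 : 1 < s k := by
      by_contra hle
      push_neg at hle
      have hterm : ∀ i ∈ Finset.range (k + 1), s k ^ k ≤ s k ^ i := by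
        intro i hi
        exact pow_le_pow_of_le_one hpos.le hle (Nat.lt_succ_iff.mp (Finset.mem_range.mp hi))
      have hsum : (k + 1 : ℝ) * s k ^ k ≤ ∑ i ∈ Finset.range (k + 1), s k ^ i := by
        have := Finset.card_nsmul_le_sum (Finset.range (k + 1)) (fun i => s k ^ i)
          (s k ^ k) hterm
        simpa [nsmul_eq_mul] using this
      have hsk : (0 : ℝ) < s k ^ k := pow_pos hpos k
      have hkk : s k ^ (k + 1) = s k * s k ^ k := by ring
      have : (k + 1 : ℝ) * s k ^ k ≤ s k * s k ^ k := by
        rw [← hkk, heq]; exact hsum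
      have hk1 : (k + 1 : ℝ) ≤ s k := le_of_mul_le_mul_right this hsk
      have : (2 : ℝ) ≤ (k : ℝ) + 1 := by
        have : (1 : ℝ) ≤ (k : ℝ) := by exact_mod_cast hk
        linarith
      linarith
    -- sum ≥ k + 1
    have hbig : (k : ℝ) + 1 ≤ s k ^ (k + 1) := by
      rw [heq]
      have : ∀ i ∈ Finset.range (k + 1), (1 : ℝ) ≤ s k ^ i := fun i _ =>
        one_le_pow₀ h1.le
      calc ((k : ℝ) + 1) = (Finset.range (k + 1)).card • (1 : ℝ) := by
            simp [nsmul_eq_mul]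
        _ ≤ ∑ i ∈ Finset.range (k + 1), s k ^ i := Finset.card_nsmul_le_sum _ _ _ this
    -- key identity : s^{k+1} * (2 - s) = 1
    have hgeom := geom_sum_mul (s k) (k + 1)
    have hid : s k ^ (k + 1) * (2 - s k) = 1 := by
      rw [← heq] at hgeom
      nlinarith [hgeom]
    have hppos : (0 : ℝ) < s k ^ (k + 1) := pow_pos hpos _
    have h2 : s k ≤ 2 := by nlinarith
    constructor
    · have h2s : 2 - s k = 1 / s k ^ (k + 1) := by
        field_simp
        linarith [hid]
      have : 1 / s k ^ (k + 1) ≤ 1 / ((k : ℝ) + 1) := by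
        apply one_div_le_one_div_of_le
        · positivity
        · exact hbig
      linarith [h2s ▸ this]
    · exact h2
  have hlo : Filter.Tendsto (fun k : ℕ => 2 - 1 / ((k : ℝ) + 1)) Filter.atTop (nhds 2) := by
    have := tendsto_one_div_add_atTop_nhds_zero_nat (𝕜 := ℝ)
    have h2 : Filter.Tendsto (fun k : ℕ => (2 : ℝ) - 1 / ((k : ℝ) + 1)) Filter.atTop
        (nhds (2 - 0)) := Filter.Tendsto.sub tendsto_const_nhds this
    simpa using h2
  apply tendsto_of_tendsto_of_tendsto_of_le_of_le' hlo tendsto_const_nhds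
  · filter_upwards [Filter.eventually_ge_atTop 1] with k hk using (key k hk).1
  · filter_upwards [Filter.eventually_ge_atTop 1] with k hk using (key k hk).2
end
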